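/- arXiv:1306.5427 — 3 statements merged into one kernel-verified Lean document; each statement's English description precedes it below -/
import Mathlib

section
/- Let R = ℂ[A₁,A₂,B₁,p₁,p₂,p₃]/(B₁(A₁−A₂) − p₂p₃) be the coordinate ring of the hypersurface X ⊂ 𝔸⁶, and let the group ℂ* × {±1} act on R through its action on X by (c,s)·(A₁,A₂,B₁,p₁,p₂,p₃) = (A₁, A₂, csB₁, c⁻¹p₁, sp₂, cp₃). Then every (ℂ* × {±1})-invariant element of R lies in the ℂ-subalgebra of R generated by the classes of A₁, A₂, b₁₂ := p₂², b₀₁ := p₁p₃, b₀₂ := p₂B₁p₁ and b₀₃ := B₁²p₁². -/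
open MvPolynomial

noncomputable section

/-- The polynomial ring `ℂ[A₁,A₂,B₁,p₁,p₂,p₃]`, with variables `X 0, …, X 5`
corresponding to `A₁, A₂, B₁, p₁, p₂, p₃`. -/
abbrev P6 := MvPolynomial (Fin 6) ℂ

/-- The defining relation `B₁(A₁ - A₂) - p₂p₃` of the hypersurface `X ⊂ 𝔸⁶`. -/
def relC2 : P6 := X 2 * (X 0 - X 1) - X 4 * X 5

/-- The ideal generated by the defining relation; `R = P6 ⧸ IC2`. -/
def IC2 : Ideal P6 := Ideal.span {relC2}

/-- The action of `(c,s) ∈ ℂ* × {±1}` on the coordinate ring, induced by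
`(c,s)·(A₁,A₂,B₁,p₁,p₂,p₃) = (A₁, A₂, csB₁, c⁻¹p₁, sp₂, cp₃)`. -/
def actC2 (c s : ℂ) : P6 →ₐ[ℂ] P6 :=
  aeval ![X 0, X 1, C (c * s) * X 2, C c⁻¹ * X 3, C s * X 4, C c * X 5]

open Polynomial in
lemma vand {M : Type*} [AddCommGroup M] [Module ℂ M] (S : Finset ℤ) (h : ℤ → M)
    (H : ∀ c : ℂ, c ≠ 0 → ∑ w ∈ S, c ^ w • h w = 0) : ∀ w ∈ S, h w = 0 := by
  intro w0 hw0
  set N : ℕ := S.sup fun w => (-w).toNat with hN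
  have hnn : ∀ w ∈ S, (0:ℤ) ≤ w + N := by
    intro w hw
    have : (-w).toNat ≤ N := Finset.le_sup (f := fun w => (-w).toNat) hw
    omega
  rw [← Module.forall_dual_apply_eq_zero_iff ℂ]
  intro φ
  set p : ℂ[X] := ∑ w ∈ S, Polynomial.monomial (w + N).toNat (φ (h w)) with hp
  have hpz : p = 0 := by
    apply Polynomial.eq_zero_of_infinite_isRoot
    apply Set.Infinite.mono (s := {x : ℂ | x ≠ 0})
    · intro c hc
      have hc' : (c:ℂ) ≠ 0 := hc
      simp only [Set.mem_setOf_eq, Polynomial.IsRoot, hp, Polynomial.eval_finset_sum,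
        Polynomial.eval_monomial]
      have : ∀ w ∈ S, φ (h w) * c ^ (w + N).toNat = c ^ (N:ℤ) * (c ^ w * φ (h w)) := by
        intro w hw
        rw [← zpow_natCast c ((w + N).toNat), Int.toNat_of_nonneg (hnn w hw),
          zpow_add₀ hc']
        ring
      rw [Finset.sum_congr rfl this, ← Finset.mul_sum]
      have := H c hc'
      have h2 : ∑ w ∈ S, c ^ w * φ (h w) = φ (∑ w ∈ S, c ^ w • h w) := by
        rw [map_sum]
        exact Finset.sum_congr rfl fun w _ => by rw [map_smul]; simp [smul_eq_mul]
      rw [h2, this, map_zero, mul_zero]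
    · have : {x : ℂ | x ≠ 0} = ({0} : Set ℂ)ᶜ := by ext x; simp
      rw [this]
      exact Set.Finite.infinite_compl (Set.finite_singleton 0)
  have hcoeff : p.coeff ((w0 + N).toNat) = φ (h w0) := by
    rw [hp, Polynomial.finset_sum_coeff]
    rw [Finset.sum_eq_single w0]
    · simp
    · intro w hw hne
      rw [Polynomial.coeff_monomial, if_neg]
      intro heq
      apply hne
      have := hnn w hw; have := hnn w0 hw0
      omega
    · intro habs; exact absurd hw0 habs
  rw [← hcoeff, hpz]
  simp

def wt (d : Fin 6 →₀ ℕ) : ℤ := (d 2 : ℤ) + d 5 - d 3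

lemma act_monomial (c s : ℂ) (d : Fin 6 →₀ ℕ) (a : ℂ) :
    actC2 c s (monomial d a) =
      C ((c * s) ^ d 2 * c⁻¹ ^ d 3 * s ^ d 4 * c ^ d 5) * monomial d a := by
  rw [show (monomial d a : P6) = C a * ∏ i, X i ^ d i by
    rw [monomial_eq]; congr 1; exact Finsupp.prod_pow d fun i => (X i : P6)]
  rw [map_mul, map_prod]
  have h0 : actC2 c s (X 0) = X 0 := by simp [actC2]
  have h1 : actC2 c s (X 1) = X 1 := by simp [actC2]
  have h2 : actC2 c s (X 2) = C (c * s) * X 2 := by simp [actC2]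
  have h3 : actC2 c s (X 3) = C c⁻¹ * X 3 := by simp [actC2]
  have h4 : actC2 c s (X 4) = C s * X 4 := by simp [actC2]
  have h5 : actC2 c s (X 5) = C c * X 5 := by
    simp only [actC2, aeval_X]; rfl
  have hC : actC2 c s (C a) = C a := by simp [actC2, algebraMap_eq]
  rw [Fin.prod_univ_six, Fin.prod_univ_six]
  simp only [map_pow, h0, h1, h2, h3, h4, h5, hC, map_mul, C_pow, mul_pow]
  ring

lemma mk_C_mul (z : ℂ) (x : P6) :
    Ideal.Quotient.mk IC2 (C z * x) = z • Ideal.Quotient.mk IC2 x := by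
  have h1 : (C z * x : P6) = z • x := by rw [Algebra.smul_def, algebraMap_eq]
  rw [h1, ← Ideal.Quotient.mkₐ_eq_mk ℂ IC2, map_smul]

lemma scalar_eq (c s : ℂ) (hc : c ≠ 0) (d : Fin 6 →₀ ℕ) :
    (c * s) ^ d 2 * c⁻¹ ^ d 3 * s ^ d 4 * c ^ d 5 = c ^ wt d * s ^ (d 2 + d 4) := by
  rw [wt, zpow_sub₀ hc, zpow_add₀ hc, zpow_natCast, zpow_natCast, zpow_natCast,
    mul_pow, pow_add]
  field_simp
  ring_nf
  rw [mul_assoc _ (c ^ d 3), ← mul_pow, mul_inv_cancel₀ hc, one_pow, mul_one]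

lemma mk_act (c s : ℂ) (hc : c ≠ 0) (f : P6) :
    Ideal.Quotient.mk IC2 (actC2 c s f) =
      ∑ d ∈ f.support, (c ^ wt d * s ^ (d 2 + d 4)) •
        Ideal.Quotient.mk IC2 (monomial d (coeff d f)) := by
  conv_lhs => rw [f.as_sum, map_sum, map_sum]
  refine Finset.sum_congr rfl fun d _ => ?_
  rw [act_monomial, scalar_eq c s hc, mk_C_mul]

lemma monomial_mem (d : Fin 6 →₀ ℕ) (hw : wt d = 0) (he : Even (d 2 + d 4)) :
    (monomial d 1 : P6) ∈ Algebra.adjoin ℂ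
      ({X 0, X 1, X 4 ^ 2, X 3 * X 5, X 4 * X 2 * X 3, X 2 ^ 2 * X 3 ^ 2} : Set P6) := by
  set G : Set P6 := {X 0, X 1, X 4 ^ 2, X 3 * X 5, X 4 * X 2 * X 3, X 2 ^ 2 * X 3 ^ 2} with hG
  have g0 : (X 0 : P6) ∈ Algebra.adjoin ℂ G := Algebra.subset_adjoin (by simp [hG])
  have g1 : (X 1 : P6) ∈ Algebra.adjoin ℂ G := Algebra.subset_adjoin (by simp [hG])
  have g2 : (X 4 ^ 2 : P6) ∈ Algebra.adjoin ℂ G := Algebra.subset_adjoin (by simp [hG])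
  have g3 : (X 3 * X 5 : P6) ∈ Algebra.adjoin ℂ G := Algebra.subset_adjoin (by simp [hG])
  have g4 : (X 4 * X 2 * X 3 : P6) ∈ Algebra.adjoin ℂ G := Algebra.subset_adjoin (by simp [hG])
  have g5 : (X 2 ^ 2 * X 3 ^ 2 : P6) ∈ Algebra.adjoin ℂ G := Algebra.subset_adjoin (by simp [hG])
  have h3 : d 3 = d 2 + d 5 := by rw [wt] at hw; omega
  have hexp : (monomial d 1 : P6) = X 0 ^ d 0 * X 1 ^ d 1 * X 2 ^ d 2 * X 3 ^ d 3 *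
      X 4 ^ d 4 * X 5 ^ d 5 := by
    rw [monomial_eq, C_1, one_mul,
      show (d.prod fun n e => (X n : P6) ^ e) = ∏ i, X i ^ d i from
        Finsupp.prod_pow d fun i => (X i : P6), Fin.prod_univ_six]
  by_cases h2 : Even (d 2)
  · have h4 : Even (d 4) := by rw [Nat.even_add] at he; exact he.mp h2
    obtain ⟨k, hk⟩ := h2
    obtain ⟨l, hl⟩ := h4
    have : (monomial d 1 : P6) = X 0 ^ d 0 * X 1 ^ d 1 * (X 2 ^ 2 * X 3 ^ 2) ^ k *
        (X 4 ^ 2) ^ l * (X 3 * X 5) ^ d 5 := by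
      rw [hexp, h3, hk, hl]; ring
    rw [this]
    exact mul_mem (mul_mem (mul_mem (mul_mem (pow_mem g0 _) (pow_mem g1 _))
      (pow_mem g5 _)) (pow_mem g2 _)) (pow_mem g3 _)
  · have h2' : Odd (d 2) := Nat.not_even_iff_odd.mp h2
    have h4 : Odd (d 4) := by
      rw [Nat.even_add] at he
      exact Nat.not_even_iff_odd.mp (fun h => h2 (he.mpr h))
    obtain ⟨k, hk⟩ := h2'
    obtain ⟨l, hl⟩ := h4
    have : (monomial d 1 : P6) = X 0 ^ d 0 * X 1 ^ d 1 * (X 4 * X 2 * X 3) *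
        (X 2 ^ 2 * X 3 ^ 2) ^ k * (X 4 ^ 2) ^ l * (X 3 * X 5) ^ d 5 := by
      rw [hexp, h3, hk, hl]; ring
    rw [this]
    exact mul_mem (mul_mem (mul_mem (mul_mem (mul_mem (pow_mem g0 _) (pow_mem g1 _)) g4)
      (pow_mem g5 _)) (pow_mem g2 _)) (pow_mem g3 _)

/-- Every `(ℂ* × {±1})`-invariant element of `R = ℂ[A₁,A₂,B₁,p₁,p₂,p₃]/(B₁(A₁-A₂) - p₂p₃)`
lies in the `ℂ`-subalgebra generated by the classes of
`A₁, A₂, p₂², p₁p₃, p₂B₁p₁, B₁²p₁²`. -/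
theorem stmt2 (r : P6 ⧸ IC2)
    (hinv : ∀ (c : ℂˣ) (s : ℂ), s = 1 ∨ s = -1 →
      ∀ f : P6, Ideal.Quotient.mk IC2 f = r →
        Ideal.Quotient.mk IC2 (actC2 (c : ℂ) s f) = r) :
    r ∈ Algebra.adjoin ℂ
      ({Ideal.Quotient.mk IC2 (X 0), Ideal.Quotient.mk IC2 (X 1),
        Ideal.Quotient.mk IC2 (X 4 ^ 2), Ideal.Quotient.mk IC2 (X 3 * X 5),
        Ideal.Quotient.mk IC2 (X 4 * X 2 * X 3),
        Ideal.Quotient.mk IC2 (X 2 ^ 2 * X 3 ^ 2)} : Set (P6 ⧸ IC2)) := by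
  obtain ⟨f, hf⟩ := Ideal.Quotient.mk_surjective r
  set m : (Fin 6 →₀ ℕ) → P6 ⧸ IC2 :=
    fun d => Ideal.Quotient.mk IC2 (monomial d (coeff d f)) with hm
  set T := f.support with hT
  have hE : ∀ c : ℂ, c ≠ 0 → ∀ s : ℂ, s = 1 ∨ s = -1 →
      ∑ d ∈ T, (c ^ wt d * s ^ (d 2 + d 4)) • m d = r := by
    intro c hc s hs
    rw [← mk_act c s hc f]
    exact hinv (Units.mk0 c hc) s hs f hf
  set T1 := T.filter (fun d => Even (d 2 + d 4)) with hT1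
  set T2 := T.filter (fun d => ¬ Even (d 2 + d 4)) with hT2
  have hA : ∀ c : ℂ, c ≠ 0 → ∑ d ∈ T1, c ^ wt d • m d = r := by
    intro c hc
    have E1 : (∑ d ∈ T1, c ^ wt d • m d) + ∑ d ∈ T2, c ^ wt d • m d = r := by
      have h := hE c hc 1 (Or.inl rfl)
      simp only [one_pow, mul_one] at h
      rw [← h, hT1, hT2]
      exact Finset.sum_filter_add_sum_filter_not T _ _
    have E2 : (∑ d ∈ T1, c ^ wt d • m d) - ∑ d ∈ T2, c ^ wt d • m d = r := by
      have h := hE c hc (-1) (Or.inr rfl)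
      rw [← Finset.sum_filter_add_sum_filter_not T (fun d => Even (d 2 + d 4)), ← hT1, ← hT2]
        at h
      have e1 : ∑ d ∈ T1, (c ^ wt d * (-1:ℂ) ^ (d 2 + d 4)) • m d
          = ∑ d ∈ T1, c ^ wt d • m d := by
        refine Finset.sum_congr rfl fun d hd => ?_
        have hev : Even (d 2 + d 4) := (Finset.mem_filter.mp hd).2
        rw [hev.neg_one_pow, mul_one]
      have e2 : ∑ d ∈ T2, (c ^ wt d * (-1:ℂ) ^ (d 2 + d 4)) • m d
          = -∑ d ∈ T2, c ^ wt d • m d := by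
        rw [← Finset.sum_neg_distrib]
        refine Finset.sum_congr rfl fun d hd => ?_
        have hod : Odd (d 2 + d 4) := Nat.not_even_iff_odd.mp (Finset.mem_filter.mp hd).2
        rw [hod.neg_one_pow, mul_neg_one, neg_smul]
      rw [e1, e2, ← sub_eq_add_neg] at h
      exact h
    have hB : ∑ d ∈ T2, c ^ wt d • m d = 0 := by
      have h1 := E1.trans E2.symm
      rw [sub_eq_add_neg, add_right_inj] at h1
      have h2 : (2:ℂ) • (∑ d ∈ T2, c ^ wt d • m d) = 0 := by
        rw [two_smul]
        nth_rewrite 1 [h1]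
        exact neg_add_cancel _
      have := congrArg (fun x => (2:ℂ)⁻¹ • x) h2
      simpa [smul_smul] using this
    rw [hB, add_zero] at E1
    exact E1
  set S : Finset ℤ := insert 0 (T1.image wt) with hS
  set g : ℤ → P6 ⧸ IC2 := fun u => ∑ d ∈ T1.filter (fun d => wt d = u), m d with hg
  have hgsum : ∀ c : ℂ, c ≠ 0 → ∑ u ∈ S, c ^ u • g u = r := by
    intro c hc
    rw [← hA c hc,
      ← Finset.sum_fiberwise_of_maps_to (g := wt) (t := S)
        (fun d hd => Finset.mem_insert_of_mem (Finset.mem_image_of_mem wt hd))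
        (fun d => c ^ wt d • m d)]
    refine Finset.sum_congr rfl fun u _ => ?_
    rw [hg, Finset.smul_sum]
    refine Finset.sum_congr rfl fun d hd => ?_
    rw [(Finset.mem_filter.mp hd).2]
  have hvand := vand S (fun u => g u - if u = 0 then r else 0) ?_ 0
    (Finset.mem_insert_self 0 _)
  swap
  · intro c hc
    have h1 : ∑ u ∈ S, c ^ u • (if u = 0 then r else 0) = r := by
      have h2 : ∀ u ∈ S, c ^ u • (if u = 0 then r else 0)
          = if u = 0 then r else 0 := by
        intro u _
        split
        · next h => rw [h]; simp
        · simp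
      rw [Finset.sum_congr rfl h2, Finset.sum_ite_eq' S 0 (fun _ => r),
        if_pos (Finset.mem_insert_self 0 _)]
    calc ∑ u ∈ S, c ^ u • (g u - if u = 0 then r else 0)
        = (∑ u ∈ S, c ^ u • g u) - ∑ u ∈ S, c ^ u • (if u = 0 then r else 0) := by
          rw [← Finset.sum_sub_distrib]
          exact Finset.sum_congr rfl fun u _ => smul_sub _ _ _
      _ = 0 := by rw [hgsum c hc, h1, sub_self]
  rw [sub_eq_zero, if_pos rfl] at hvand
  rw [← hvand, hg]
  apply Subalgebra.sum_mem
  intro d hd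
  have hdw : wt d = 0 := (Finset.mem_filter.mp hd).2
  have hde : Even (d 2 + d 4) := (Finset.mem_filter.mp (Finset.mem_filter.mp hd).1).2
  have hmono := monomial_mem d hdw hde
  have hmk : Ideal.Quotient.mk IC2 (monomial d 1) ∈ Algebra.adjoin ℂ
      ({Ideal.Quotient.mk IC2 (X 0), Ideal.Quotient.mk IC2 (X 1),
        Ideal.Quotient.mk IC2 (X 4 ^ 2), Ideal.Quotient.mk IC2 (X 3 * X 5),
        Ideal.Quotient.mk IC2 (X 4 * X 2 * X 3),
        Ideal.Quotient.mk IC2 (X 2 ^ 2 * X 3 ^ 2)} : Set (P6 ⧸ IC2)) := by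
    have himg : Ideal.Quotient.mkₐ ℂ IC2 (monomial d 1) ∈
        (Algebra.adjoin ℂ ({X 0, X 1, X 4 ^ 2, X 3 * X 5, X 4 * X 2 * X 3,
          X 2 ^ 2 * X 3 ^ 2} : Set P6)).map (Ideal.Quotient.mkₐ ℂ IC2) :=
      Subalgebra.mem_map.mpr ⟨_, hmono, rfl⟩
    rw [AlgHom.map_adjoin] at himg
    simpa only [Set.image_insert_eq, Set.image_singleton, Ideal.Quotient.mkₐ_eq_mk]
      using himg
  have hmd : m d = coeff d f • Ideal.Quotient.mk IC2 (monomial d 1) := by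
    rw [hm, ← mk_C_mul, C_mul_monomial, mul_one]
  rw [hmd]
  exact Subalgebra.smul_mem _ hmk _
end
end

section
/- Let R = ℂ[A₀,A₁,B₀,p₀,p₁]/(B₀(A₁−A₀) + p₁p₀) with the {±1} × {±1}-action given by (s₁,s₂)·(A₀,A₁,B₀,p₀,p₁) = (A₀, A₁, s₁s₂B₀, s₁p₀, s₂p₁). The ℂ-algebra homomorphism from ℂ[x₁,x₂,y₀,y₁,t] to the subring of {±1}×{±1}-invariants of R sending x₁ ↦ A₀, x₂ ↦ A₁, y₀ ↦ p₀², y₁ ↦ p₁², t ↦ B₀² is surjective, and its kernel is the principal ideal generated by y₁y₀ − t(x₁−x₂)². In particular the invariant ring is isomorphic to ℂ[x₁,x₂,y₀,y₁,t]/(y₁y₀ − t(x₁−x₂)²). -/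
open MvPolynomial

noncomputable section

/-- The polynomial ring `ℂ[A₀,A₁,B₀,p₀,p₁]`, with variables `X 0, …, X 4`
corresponding to `A₀, A₁, B₀, p₀, p₁`. -/
abbrev P5 := MvPolynomial (Fin 5) ℂ

/-- The defining relation `B₀(A₁ - A₀) + p₁p₀` of the hypersurface in `𝔸⁵`. -/
def relTC1 : P5 := X 2 * (X 1 - X 0) + X 4 * X 3

/-- The ideal generated by the defining relation; `R = P5 ⧸ ITC1`. -/
def ITC1 : Ideal P5 := Ideal.span {relTC1}

/-- The action of `(s₁,s₂) ∈ {±1} × {±1}` on the coordinate ring, induced by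
`(s₁,s₂)·(A₀,A₁,B₀,p₀,p₁) = (A₀, A₁, s₁s₂B₀, s₁p₀, s₂p₁)`. -/
def actTC1 (s₁ s₂ : ℂ) : P5 →ₐ[ℂ] P5 :=
  aeval ![X 0, X 1, C (s₁ * s₂) * X 2, C s₁ * X 3, C s₂ * X 4]

/-- The homomorphism `ℂ[x₁,x₂,y₀,y₁,t] → R` sending
`x₁ ↦ A₀`, `x₂ ↦ A₁`, `y₀ ↦ p₀²`, `y₁ ↦ p₁²`, `t ↦ B₀²`
(here `x₁,x₂,y₀,y₁,t` are the variables `X 0, …, X 4` of the source). -/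
def psiTC1 : MvPolynomial (Fin 5) ℂ →ₐ[ℂ] P5 ⧸ ITC1 :=
  aeval ![Ideal.Quotient.mk ITC1 (X 0), Ideal.Quotient.mk ITC1 (X 1),
    Ideal.Quotient.mk ITC1 (X 3 ^ 2), Ideal.Quotient.mk ITC1 (X 4 ^ 2),
    Ideal.Quotient.mk ITC1 (X 2 ^ 2)]

/-! ### Auxiliary definitions -/

def phiA : MvPolynomial (Fin 5) ℂ →ₐ[ℂ] P5 :=
  aeval ![X 0, X 1, X 3 ^ 2, X 4 ^ 2, X 2 ^ 2]

def sgnA (ε : Fin 5 → ℂ) : P5 →ₐ[ℂ] P5 := aeval fun j => C (ε j) * X j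

def Tm (n : Fin 5 →₀ ℕ) : Fin 5 →₀ ℕ :=
  Finsupp.equivFunOnFinite.symm ![n 0, n 1, 2 * n 4, 2 * n 2, 2 * n 3]

lemma Tm_apply (n : Fin 5 →₀ ℕ) :
    Tm n 0 = n 0 ∧ Tm n 1 = n 1 ∧ Tm n 2 = 2 * n 4 ∧ Tm n 3 = 2 * n 2 ∧ Tm n 4 = 2 * n 3 := by
  refine ⟨?_, ?_, ?_, ?_, ?_⟩ <;>
    simp [Tm, Finsupp.equivFunOnFinite_symm_apply_apply]

lemma monomial_eq'' (m : Fin 5 →₀ ℕ) (c : ℂ) :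
    (monomial m c : P5) = C c * ∏ i, X i ^ m i := by
  rw [monomial_eq, Finsupp.prod_fintype]
  intro i; exact pow_zero _

lemma psi_eq (q : MvPolynomial (Fin 5) ℂ) :
    psiTC1 q = Ideal.Quotient.mk ITC1 (phiA q) := by
  have h : psiTC1 = (Ideal.Quotient.mkₐ ℂ ITC1).comp phiA := by
    apply MvPolynomial.algHom_ext
    intro i
    fin_cases i <;> simp [psiTC1, phiA]
  rw [h]; rfl

lemma sgnA_monomial (ε : Fin 5 → ℂ) (m : Fin 5 →₀ ℕ) (c : ℂ) :
    sgnA ε (monomial m c) = monomial m ((∏ i, ε i ^ m i) * c) := by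
  rw [sgnA, aeval_monomial, Finsupp.prod_fintype _ _ (fun i => pow_zero _),
    monomial_eq'', algebraMap_eq, map_mul, map_prod]
  simp only [mul_pow, map_pow]
  rw [Finset.prod_mul_distrib]
  ring

lemma phiA_monomial (n : Fin 5 →₀ ℕ) (c : ℂ) :
    phiA (monomial n c) = monomial (Tm n) c := by
  obtain ⟨h0, h1, h2, h3, h4⟩ := Tm_apply n
  rw [phiA, aeval_monomial, Finsupp.prod_fintype _ _ (fun i => pow_zero _),
    monomial_eq'', algebraMap_eq, Fin.prod_univ_five, Fin.prod_univ_five, h0, h1, h2, h3, h4]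
  simp only [Matrix.cons_val_zero, Matrix.cons_val_one, Matrix.head_cons,
    Matrix.cons_val_two, Matrix.cons_val_three, Matrix.cons_val_four, Matrix.tail_cons]
  ring

lemma Tm_inj : Function.Injective Tm := by
  intro n n' h
  obtain ⟨h0, h1, h2, h3, h4⟩ := Tm_apply n
  obtain ⟨g0, g1, g2, g3, g4⟩ := Tm_apply n'
  have e0 : Tm n 0 = Tm n' 0 := by rw [h]
  have e1 : Tm n 1 = Tm n' 1 := by rw [h]
  have e2 : Tm n 2 = Tm n' 2 := by rw [h]
  have e3 : Tm n 3 = Tm n' 3 := by rw [h]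
  have e4 : Tm n 4 = Tm n' 4 := by rw [h]
  ext i
  fin_cases i
  · show n 0 = n' 0; omega
  · show n 1 = n' 1; omega
  · show n 2 = n' 2; omega
  · show n 3 = n' 3; omega
  · show n 4 = n' 4; omega

lemma phiA_as_sum (f : MvPolynomial (Fin 5) ℂ) :
    phiA f = ∑ n ∈ f.support, monomial (Tm n) (coeff n f) := by
  conv_lhs => rw [f.as_sum]
  rw [map_sum]
  exact Finset.sum_congr rfl fun n _ => phiA_monomial n (coeff n f)

lemma coeff_phiA (f : MvPolynomial (Fin 5) ℂ) (n : Fin 5 →₀ ℕ) :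
    coeff (Tm n) (phiA f) = coeff n f := by
  rw [phiA_as_sum, coeff_sum]
  by_cases hn : n ∈ f.support
  · rw [Finset.sum_eq_single n (fun b _ hb => by
      rw [coeff_monomial, if_neg (fun hc => hb (Tm_inj hc))])
      (fun hn' => absurd hn hn')]
    rw [coeff_monomial, if_pos rfl]
  · rw [notMem_support_iff.mp hn, Finset.sum_eq_zero]
    intro b hb
    rw [coeff_monomial, if_neg]
    intro hc
    exact hn (Tm_inj hc ▸ hb)

lemma phiA_inj : Function.Injective phiA := by
  intro a b hab
  ext n
  rw [← coeff_phiA a n, ← coeff_phiA b n, hab]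

lemma coeff_sgnA (ε : Fin 5 → ℂ) (m : Fin 5 →₀ ℕ) (F : P5) :
    coeff m (sgnA ε F) = (∏ i, ε i ^ m i) * coeff m F := by
  conv_lhs => rw [F.as_sum, map_sum]
  rw [coeff_sum]
  rw [Finset.sum_congr rfl fun n _ => by rw [sgnA_monomial ε n (coeff n F)]]
  by_cases hm : m ∈ F.support
  · rw [Finset.sum_eq_single m (fun b _ hb => by rw [coeff_monomial, if_neg hb])
      (fun hm' => absurd hm hm')]
    rw [coeff_monomial, if_pos rfl]
  · rw [notMem_support_iff.mp hm, mul_zero, Finset.sum_eq_zero]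
    intro b hb
    rw [coeff_monomial, if_neg]
    intro hc
    exact (hc ▸ hm) hb

lemma sgnA_invol (ε : Fin 5 → ℂ) (h : ∀ i, ε i * ε i = 1) (p : P5) :
    sgnA ε (sgnA ε p) = p := by
  apply MvPolynomial.ext
  intro m
  rw [coeff_sgnA, coeff_sgnA, ← mul_assoc, ← Finset.prod_mul_distrib]
  have : ∀ i ∈ Finset.univ, ε i ^ m i * ε i ^ m i = 1 := by
    intro i _
    rw [← mul_pow, h i, one_pow]
  rw [Finset.prod_congr rfl this, Finset.prod_const_one, one_mul]

lemma sgnA_support (ε : Fin 5 → ℂ) (F : P5) (h : sgnA ε F = F)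
    {m : Fin 5 →₀ ℕ} (hm : m ∈ F.support) : ∏ i, ε i ^ m i = 1 := by
  have hc : coeff m F ≠ 0 := mem_support_iff.mp hm
  have h1 : (∏ i, ε i ^ m i) * coeff m F = 1 * coeff m F := by
    rw [one_mul, ← coeff_sgnA, h]
  exact mul_right_cancel₀ hc h1

def backE (m : Fin 5 →₀ ℕ) : Fin 5 →₀ ℕ :=
  Finsupp.equivFunOnFinite.symm ![m 0, m 1, m 3 / 2, m 4 / 2, m 2 / 2]

lemma backE_apply (m : Fin 5 →₀ ℕ) :
    backE m 0 = m 0 ∧ backE m 1 = m 1 ∧ backE m 2 = m 3 / 2 ∧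
      backE m 3 = m 4 / 2 ∧ backE m 4 = m 2 / 2 := by
  refine ⟨?_, ?_, ?_, ?_, ?_⟩ <;>
    simp [backE, Finsupp.equivFunOnFinite_symm_apply_apply]

lemma Tm_backE (m : Fin 5 →₀ ℕ) (h2 : Even (m 2)) (h3 : Even (m 3)) (h4 : Even (m 4)) :
    Tm (backE m) = m := by
  obtain ⟨t0, t1, t2, t3, t4⟩ := Tm_apply (backE m)
  obtain ⟨b0, b1, b2, b3, b4⟩ := backE_apply m
  obtain ⟨a2, ha2⟩ := h2
  obtain ⟨a3, ha3⟩ := h3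
  obtain ⟨a4, ha4⟩ := h4
  ext i
  fin_cases i
  · show Tm (backE m) 0 = m 0; omega
  · show Tm (backE m) 1 = m 1; omega
  · show Tm (backE m) 2 = m 2; omega
  · show Tm (backE m) 3 = m 3; omega
  · show Tm (backE m) 4 = m 4; omega

lemma Tm_backE_odd (m : Fin 5 →₀ ℕ) (h2 : ¬Even (m 2)) (h3 : ¬Even (m 3)) (h4 : ¬Even (m 4)) :
    Finsupp.single 2 1 + Finsupp.single 3 1 + Finsupp.single 4 1 + Tm (backE m) = m := by
  obtain ⟨t0, t1, t2, t3, t4⟩ := Tm_apply (backE m)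
  obtain ⟨b0, b1, b2, b3, b4⟩ := backE_apply m
  rw [Nat.not_even_iff] at h2 h3 h4
  have key : ∀ j : Fin 5,
      (Finsupp.single 2 1 + Finsupp.single 3 1 + Finsupp.single 4 1 + Tm (backE m)
          : Fin 5 →₀ ℕ) j
        = (if (2 : Fin 5) = j then 1 else 0) + (if (3 : Fin 5) = j then 1 else 0)
          + (if (4 : Fin 5) = j then 1 else 0) + Tm (backE m) j := by
    intro j
    rw [Finsupp.add_apply, Finsupp.add_apply, Finsupp.add_apply,
      Finsupp.single_apply, Finsupp.single_apply, Finsupp.single_apply]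
  ext i
  fin_cases i
  · rw [show (⟨0, by omega⟩ : Fin 5) = 0 from rfl, key 0,
      if_neg (show ¬((2 : Fin 5) = 0) by decide), if_neg (show ¬((3 : Fin 5) = 0) by decide),
      if_neg (show ¬((4 : Fin 5) = 0) by decide)]
    beta_reduce
    omega
  · rw [show (⟨1, by omega⟩ : Fin 5) = 1 from rfl, key 1,
      if_neg (show ¬((2 : Fin 5) = 1) by decide), if_neg (show ¬((3 : Fin 5) = 1) by decide),
      if_neg (show ¬((4 : Fin 5) = 1) by decide)]
    beta_reduce
    omega
  · rw [show (⟨2, by omega⟩ : Fin 5) = 2 from rfl, key 2,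
      if_pos rfl, if_neg (show ¬((3 : Fin 5) = 2) by decide),
      if_neg (show ¬((4 : Fin 5) = 2) by decide)]
    beta_reduce
    omega
  · rw [show (⟨3, by omega⟩ : Fin 5) = 3 from rfl, key 3,
      if_neg (show ¬((2 : Fin 5) = 3) by decide), if_pos rfl,
      if_neg (show ¬((4 : Fin 5) = 3) by decide)]
    beta_reduce
    omega
  · rw [show (⟨4, by omega⟩ : Fin 5) = 4 from rfl, key 4,
      if_neg (show ¬((2 : Fin 5) = 4) by decide), if_neg (show ¬((3 : Fin 5) = 4) by decide),
      if_pos rfl]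
    beta_reduce
    omega

lemma X_mul_monomial' (k : Fin 5 →₀ ℕ) (c : ℂ) :
    X 2 * X 3 * X 4 * (monomial k c : P5) =
      monomial (Finsupp.single 2 1 + Finsupp.single 3 1 + Finsupp.single 4 1 + k) c := by
  rw [show (X 2 : P5) = monomial (Finsupp.single 2 1) 1 from rfl,
    show (X 3 : P5) = monomial (Finsupp.single 3 1) 1 from rfl,
    show (X 4 : P5) = monomial (Finsupp.single 4 1) 1 from rfl,
    monomial_mul, monomial_mul, monomial_mul, one_mul, one_mul, one_mul]

lemma exists_phiA_sum (s : Finset (Fin 5 →₀ ℕ)) (c : (Fin 5 →₀ ℕ) → ℂ)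
    (h : ∀ m ∈ s, Even (m 2) ∧ Even (m 3) ∧ Even (m 4)) :
    ∃ P, phiA P = ∑ m ∈ s, monomial m (c m) := by
  refine ⟨∑ m ∈ s.attach, monomial (backE m.1) (c m.1), ?_⟩
  rw [map_sum, ← Finset.sum_attach s fun m => monomial m (c m)]
  refine Finset.sum_congr rfl fun m _ => ?_
  obtain ⟨e2, e3, e4⟩ := h m.1 m.2
  rw [phiA_monomial, Tm_backE _ e2 e3 e4]

lemma exists_phiA_sum_odd (s : Finset (Fin 5 →₀ ℕ)) (c : (Fin 5 →₀ ℕ) → ℂ)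
    (h : ∀ m ∈ s, ¬Even (m 2) ∧ ¬Even (m 3) ∧ ¬Even (m 4)) :
    ∃ Q, X 2 * X 3 * X 4 * phiA Q = ∑ m ∈ s, monomial m (c m) := by
  refine ⟨∑ m ∈ s.attach, monomial (backE m.1) (c m.1), ?_⟩
  rw [map_sum, Finset.mul_sum, ← Finset.sum_attach s fun m => monomial m (c m)]
  refine Finset.sum_congr rfl fun m _ => ?_
  obtain ⟨e2, e3, e4⟩ := h m.1 m.2
  rw [phiA_monomial, X_mul_monomial', Tm_backE_odd _ e2 e3 e4]

lemma X_dvd_of_support (i : Fin 5) (F : P5) (h : ∀ m ∈ F.support, 1 ≤ m i) :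
    ∃ G, X i * G = F := by
  refine ⟨∑ m ∈ F.support.attach, monomial (m.1 - Finsupp.single i 1) (coeff m.1 F), ?_⟩
  rw [Finset.mul_sum]
  conv_rhs => rw [F.as_sum]
  rw [← Finset.sum_attach F.support fun m => monomial m (coeff m F)]
  refine Finset.sum_congr rfl fun m _ => ?_
  rw [show (X i : P5) = monomial (Finsupp.single i 1) 1 from rfl, monomial_mul, one_mul]
  have hi := h m.1 m.2
  have hidx : Finsupp.single i 1 + (m.1 - Finsupp.single i 1) = m.1 := by
    ext j
    by_cases hj : i = j
    · subst hj
      simp [Finsupp.add_apply, Finsupp.tsub_apply, Finsupp.single_apply]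
      omega
    · simp [Finsupp.add_apply, Finsupp.tsub_apply, Finsupp.single_apply, hj]
  rw [hidx]

lemma prime_X_P5 (i : Fin 5) : Prime (X i : P5) := by
  let e := (renameEquiv ℂ (Equiv.swap (0 : Fin 5) i)).trans (finSuccEquiv ℂ 4)
  have he : e (X i) = Polynomial.X := by
    simp only [e, AlgEquiv.trans_apply, renameEquiv_apply, rename_X,
      Equiv.swap_apply_right, finSuccEquiv_X_zero]
  have hp : Prime (e (X i)) := he ▸ Polynomial.prime_X
  exact (MulEquiv.prime_iff e.toRingEquiv.toMulEquiv).mp hp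

lemma not_dvd_X3 : ¬ (X 3 : P5) ∣ (X 1 - X 0) := by
  rintro ⟨w, hw⟩
  have h2 := congrArg (aeval (fun j : Fin 5 => if j = 3 then (0 : P5) else X j)) hw
  simp only [map_sub, map_mul, aeval_X, if_neg (show (1 : Fin 5) ≠ 3 by decide),
    if_neg (show (0 : Fin 5) ≠ 3 by decide), if_pos rfl, zero_mul] at h2
  have h3 := congrArg (eval (![0, 1, 0, 0, 0] : Fin 5 → ℂ)) h2
  simp at h3

lemma not_dvd_X4 : ¬ (X 4 : P5) ∣ (X 1 - X 0) := by
  rintro ⟨w, hw⟩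
  have h2 := congrArg (aeval (fun j : Fin 5 => if j = 4 then (0 : P5) else X j)) hw
  simp only [map_sub, map_mul, aeval_X, if_neg (show (1 : Fin 5) ≠ 4 by decide),
    if_neg (show (0 : Fin 5) ≠ 4 by decide), if_pos rfl, zero_mul] at h2
  have h3 := congrArg (eval (![0, 1, 0, 0, 0] : Fin 5 → ℂ)) h2
  simp at h3

def gpoly : MvPolynomial (Fin 5) ℂ := X 3 * X 2 - X 4 * (X 0 - X 1) ^ 2

lemma phiA_g : phiA gpoly = X 4 ^ 2 * X 3 ^ 2 - X 2 ^ 2 * (X 0 - X 1) ^ 2 := by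
  simp only [gpoly, phiA, map_sub, map_mul, map_pow, aeval_X, Matrix.cons_val_zero,
    Matrix.cons_val_one, Matrix.head_cons, Matrix.cons_val_two, Matrix.cons_val_three,
    Matrix.cons_val_four, Matrix.tail_cons]

lemma phiA_g_ne : phiA gpoly ≠ 0 := by
  intro h
  rw [phiA_g] at h
  have h3 := congrArg (eval (![0, 0, 0, 1, 1] : Fin 5 → ℂ)) h
  simp at h3

lemma sq_Cmul (a : ℂ) (h : a * a = 1) (p : P5) : (C a * p) ^ 2 = p ^ 2 := by
  have h1 : (C a * p) ^ 2 = C (a * a) * p ^ 2 := by rw [C_mul]; ring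
  rw [h1, h, C_1, one_mul]

lemma sgnA_phiA (ε : Fin 5 → ℂ) (h0 : ε 0 = 1) (h1 : ε 1 = 1) (h2 : ε 2 * ε 2 = 1)
    (h3 : ε 3 * ε 3 = 1) (h4 : ε 4 * ε 4 = 1) (q : MvPolynomial (Fin 5) ℂ) :
    sgnA ε (phiA q) = phiA q := by
  have key : (sgnA ε).comp phiA = phiA := by
    apply MvPolynomial.algHom_ext
    intro i
    fin_cases i
    · simp [sgnA, phiA, h0]
    · simp [sgnA, phiA, h1]
    · simp [sgnA, phiA]; exact sq_Cmul _ h3 _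
    · simp [sgnA, phiA]; exact sq_Cmul _ h4 _
    · simp [sgnA, phiA]; exact sq_Cmul _ h2 _
  exact congrFun (congrArg (fun (f : _ →ₐ[ℂ] _) => (f : _ → _)) key) q

lemma sgnA_C_mul (ε : Fin 5 → ℂ) (c : ℂ) (x : P5) :
    sgnA ε (C c * x) = C c * sgnA ε x := by
  rw [map_mul]
  congr 1
  rw [show (C c : P5) = algebraMap ℂ P5 c from rfl]
  exact AlgHom.commutes _ c

lemma act_eq_sgnA (s₁ s₂ : ℂ) (p : P5) :
    actTC1 s₁ s₂ p = sgnA ![1, 1, s₁ * s₂, s₁, s₂] p := by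
  have key : actTC1 s₁ s₂ = sgnA ![1, 1, s₁ * s₂, s₁, s₂] := by
    apply MvPolynomial.algHom_ext
    intro i
    fin_cases i <;>
      simp [actTC1, sgnA, Matrix.cons_val_zero, Matrix.cons_val_one, Matrix.head_cons,
        Matrix.cons_val_two, Matrix.cons_val_three, Matrix.cons_val_four, Matrix.tail_cons]
  rw [key]

lemma act_act (s₁ s₂ t₁ t₂ : ℂ) (p : P5) :
    actTC1 s₁ s₂ (actTC1 t₁ t₂ p) = actTC1 (s₁ * t₁) (s₂ * t₂) p := by
  have key : (actTC1 s₁ s₂).comp (actTC1 t₁ t₂) = actTC1 (s₁ * t₁) (s₂ * t₂) := by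
    apply MvPolynomial.algHom_ext
    intro i
    fin_cases i <;> simp [actTC1] <;> ring
  exact congrFun (congrArg (fun (f : _ →ₐ[ℂ] _) => (f : _ → _)) key) p

lemma act_id (p : P5) : actTC1 1 1 p = p := by
  have key : actTC1 1 1 = AlgHom.id ℂ P5 := by
    apply MvPolynomial.algHom_ext
    intro i
    fin_cases i <;>
      simp [actTC1, Matrix.cons_val_zero, Matrix.cons_val_one, Matrix.head_cons,
        Matrix.cons_val_two, Matrix.cons_val_three, Matrix.cons_val_four, Matrix.tail_cons]
  rw [key]; rfl

lemma act_C_mul (s₁ s₂ c : ℂ) (x : P5) :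
    actTC1 s₁ s₂ (C c * x) = C c * actTC1 s₁ s₂ x := by
  rw [map_mul]
  congr 1
  rw [show (C c : P5) = algebraMap ℂ P5 c from rfl]
  exact AlgHom.commutes _ c

lemma act_rel (s₁ s₂ : ℂ) : actTC1 s₁ s₂ relTC1 = C (s₁ * s₂) * relTC1 := by
  simp only [relTC1, actTC1, map_add, map_mul, map_sub, aeval_X, Matrix.cons_val_zero,
    Matrix.cons_val_one, Matrix.head_cons, Matrix.cons_val_two, Matrix.cons_val_three,
    Matrix.cons_val_four, Matrix.tail_cons]
  ring

lemma sgn2_rel : sgnA ![1, 1, -1, 1, 1] relTC1 = -(X 2 * (X 1 - X 0)) + X 4 * X 3 := by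
  simp only [relTC1, sgnA, map_add, map_mul, map_sub, aeval_X, Matrix.cons_val_zero,
    Matrix.cons_val_one, Matrix.head_cons, Matrix.cons_val_two, Matrix.cons_val_three,
    Matrix.cons_val_four, Matrix.tail_cons, map_neg, C_1, map_one]
  ring

lemma parity_of_inv (a b : Fin 5) (εv : Fin 5 → ℂ) (F : P5) (h : sgnA εv F = F)
    (hv : ∀ i, εv i = if i = a ∨ i = b then -1 else 1)
    {m : Fin 5 →₀ ℕ} (hm : m ∈ F.support) (hab : a ≠ b) : Even (m a + m b) := by
  have h1 := sgnA_support εv F h hm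
  have h2 : ∏ i, εv i ^ m i = (-1 : ℂ) ^ (m a + m b) := by
    rw [pow_add]
    rw [show (Finset.univ : Finset (Fin 5)) = insert a (insert b (Finset.univ.erase a |>.erase b))
      from by
        rw [Finset.insert_erase, Finset.insert_erase] <;>
          simp [Finset.mem_erase, hab.symm]]
    rw [Finset.prod_insert (by simp [Finset.mem_erase, hab]),
      Finset.prod_insert (by simp [Finset.mem_erase])]
    rw [hv a, hv b, if_pos (Or.inl rfl), if_pos (Or.inr rfl)]
    rw [Finset.prod_congr rfl (fun i hi => by
      rw [hv i, if_neg, one_pow]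
      simp only [Finset.mem_erase] at hi
      tauto)]
    rw [Finset.prod_const_one, mul_one]
  rw [h2] at h1
  exact (neg_one_pow_eq_one_iff_even (by norm_num : (-1 : ℂ) ≠ 1)).mp h1

lemma parity_single (a : Fin 5) (εv : Fin 5 → ℂ) (F : P5) (h : sgnA εv F = F)
    (hv : ∀ i, εv i = if i = a then -1 else 1)
    {m : Fin 5 →₀ ℕ} (hm : m ∈ F.support) : Even (m a) := by
  have h1 := sgnA_support εv F h hm
  have h2 : ∏ i, εv i ^ m i = (-1 : ℂ) ^ (m a) := by
    rw [show (Finset.univ : Finset (Fin 5)) = insert a (Finset.univ.erase a) from by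
      rw [Finset.insert_erase]; simp]
    rw [Finset.prod_insert (by simp)]
    rw [hv a, if_pos rfl]
    rw [Finset.prod_congr rfl (fun i hi => by
      rw [hv i, if_neg, one_pow]
      simp only [Finset.mem_erase] at hi
      exact hi.1)]
    rw [Finset.prod_const_one, mul_one]
  rw [h2] at h1
  exact (neg_one_pow_eq_one_iff_even (by norm_num : (-1 : ℂ) ≠ 1)).mp h1

lemma invariant_decomp (F : P5)
    (hA : sgnA ![1, 1, -1, -1, 1] F = F) (hB : sgnA ![1, 1, -1, 1, -1] F = F) :
    ∃ P Q, F = phiA P + X 2 * X 3 * X 4 * phiA Q := by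
  have hpar : ∀ m ∈ F.support, Even (m 2 + m 3) ∧ Even (m 2 + m 4) := by
    intro m hm
    constructor
    · exact parity_of_inv 2 3 _ F hA (by intro i; fin_cases i <;> simp <;> decide) hm
        (by decide)
    · exact parity_of_inv 2 4 _ F hB (by intro i; fin_cases i <;> simp <;> decide) hm
        (by decide)
  obtain ⟨P, hP⟩ := exists_phiA_sum (F.support.filter fun m => Even (m 2))
      (fun m => coeff m F) (by
    intro m hm
    rw [Finset.mem_filter] at hm
    obtain ⟨h23, h24⟩ := hpar m hm.1
    refine ⟨hm.2, ?_, ?_⟩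
    · exact (Nat.even_add.mp h23).mp hm.2
    · exact (Nat.even_add.mp h24).mp hm.2)
  obtain ⟨Q, hQ⟩ := exists_phiA_sum_odd (F.support.filter fun m => ¬Even (m 2))
      (fun m => coeff m F) (by
    intro m hm
    rw [Finset.mem_filter] at hm
    obtain ⟨h23, h24⟩ := hpar m hm.1
    refine ⟨hm.2, ?_, ?_⟩
    · exact fun h3 => hm.2 ((Nat.even_add.mp h23).mpr h3)
    · exact fun h4 => hm.2 ((Nat.even_add.mp h24).mpr h4))
  refine ⟨P, Q, ?_⟩
  rw [hP, hQ]
  conv_lhs => rw [F.as_sum]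
  exact (Finset.sum_filter_add_sum_filter_not F.support (fun m => Even (m 2))
    (fun m => monomial m (coeff m F))).symm

lemma allEven_decomp (F : P5)
    (h2 : sgnA ![1, 1, -1, 1, 1] F = F) (h3 : sgnA ![1, 1, 1, -1, 1] F = F)
    (h4 : sgnA ![1, 1, 1, 1, -1] F = F) :
    ∃ P, phiA P = F := by
  obtain ⟨P, hP⟩ := exists_phiA_sum F.support (fun m => coeff m F) (by
    intro m hm
    refine ⟨?_, ?_, ?_⟩
    · exact parity_single 2 _ F h2 (by intro i; fin_cases i <;> simp <;> decide) hm
    · exact parity_single 3 _ F h3 (by intro i; fin_cases i <;> simp <;> decide) hm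
    · exact parity_single 4 _ F h4 (by intro i; fin_cases i <;> simp <;> decide) hm)
  exact ⟨P, by rw [hP, ← F.as_sum]⟩

lemma X2_dvd_odd (o : P5) (h : sgnA ![1, 1, -1, 1, 1] o = -o) : ∃ o', X 2 * o' = o := by
  apply X_dvd_of_support
  intro m hm
  have h1 : coeff m (sgnA ![1, 1, -1, 1, 1] o) = (-1) ^ m 2 * coeff m o := by
    rw [coeff_sgnA, Fin.prod_univ_five]
    simp
  rw [h, coeff_neg] at h1
  by_contra hlt
  have hm2 : m 2 = 0 := by omega
  rw [hm2, pow_zero, one_mul] at h1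
  have hc := mem_support_iff.mp hm
  apply hc
  have h2 : (2 : ℂ) * coeff m o = 0 := by linear_combination -h1
  exact (mul_eq_zero.mp h2).resolve_left two_ne_zero

lemma hrel_expand : relTC1 = X 2 * (X 1 - X 0) + X 4 * X 3 := rfl

lemma ker_sub (f : MvPolynomial (Fin 5) ℂ) (hker : psiTC1 f = 0) :
    ∃ m, f = gpoly * m := by
  have hmem : phiA f ∈ ITC1 := by
    rw [psi_eq] at hker
    exact Ideal.Quotient.eq_zero_iff_mem.mp hker
  rw [ITC1, Ideal.mem_span_singleton] at hmem
  obtain ⟨h, hh⟩ := hmem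
  -- σ-invariance of phiA f under flipping X 2
  have hs2f : sgnA ![1, 1, -1, 1, 1] (phiA f) = phiA f :=
    sgnA_phiA _ (by simp) (by simp) (by simp) (by simp) (by simp) f
  have hs3f : sgnA ![1, 1, 1, -1, 1] (phiA f) = phiA f :=
    sgnA_phiA _ (by simp) (by simp) (by simp) (by simp) (by simp) f
  have hs4f : sgnA ![1, 1, 1, 1, -1] (phiA f) = phiA f :=
    sgnA_phiA _ (by simp) (by simp) (by simp) (by simp) (by simp) f
  set σ2 := sgnA ![1, 1, -1, 1, 1] with hσ2
  set sh := σ2 h with hsh_def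
  have hinv : ∀ i : Fin 5, (![1, 1, -1, 1, 1] : Fin 5 → ℂ) i * ![1, 1, -1, 1, 1] i = 1 := by
    intro i; fin_cases i <;> norm_num
  have hσσ : σ2 sh = h := sgnA_invol _ hinv h
  have hsh : phiA f = (-(X 2 * (X 1 - X 0)) + X 4 * X 3) * sh := by
    have := congrArg σ2 hh
    rw [hs2f, map_mul, sgn2_rel] at this
    exact this
  have H : (X 2 * (X 1 - X 0) + X 4 * X 3) * h
      = (-(X 2 * (X 1 - X 0)) + X 4 * X 3) * sh := by
    rw [← hrel_expand, ← hh, hsh]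
  set e := C (2⁻¹ : ℂ) * (h + sh) with he_def
  set o := C (2⁻¹ : ℂ) * (h - sh) with ho_def
  have hC2 : (C (2⁻¹ : ℂ) : P5) * 2 = 1 := by
    rw [show (2 : P5) = C 2 from (map_ofNat C 2).symm, ← C_mul]
    norm_num
  have heo : h = e + o := by
    rw [he_def, ho_def, ← mul_add, show h + sh + (h - sh) = 2 * h from by ring]
    rw [show C (2⁻¹ : ℂ) * (2 * h) = (C (2⁻¹ : ℂ) * 2) * h from by ring, hC2, one_mul]
  have hodd : σ2 o = -o := by
    rw [ho_def, hσ2, sgnA_C_mul, map_sub]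
    rw [← hσ2, ← hsh_def, hσσ]
    ring
  have key : X 4 * X 3 * o = -(X 2 * (X 1 - X 0) * e) := by
    rw [he_def, ho_def]
    linear_combination C (2⁻¹ : ℂ) * H
  obtain ⟨o', ho'⟩ := X2_dvd_odd o (by rw [← hσ2]; exact hodd)
  rw [← ho'] at key
  have key2 : X 4 * X 3 * o' = -((X 1 - X 0) * e) := by
    apply mul_left_cancel₀ (X_ne_zero (R := ℂ) (2 : Fin 5))
    linear_combination key
  have hX3dvd : (X 3 : P5) ∣ (X 1 - X 0) * e := ⟨-(X 4 * o'), by linear_combination key2⟩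
  obtain ⟨e₁, he1⟩ : ∃ e₁, e = X 3 * e₁ := by
    rcases (prime_X_P5 3).2.2 _ _ hX3dvd with hl | hr
    · exact absurd hl not_dvd_X3
    · exact hr
  rw [he1] at key2
  have key3 : X 4 * o' = -((X 1 - X 0) * e₁) := by
    apply mul_left_cancel₀ (X_ne_zero (R := ℂ) (3 : Fin 5))
    linear_combination key2
  have hX4dvd : (X 4 : P5) ∣ (X 1 - X 0) * e₁ := ⟨-o', by linear_combination key3⟩
  obtain ⟨e₂, he2⟩ : ∃ e₂, e₁ = X 4 * e₂ := by
    rcases (prime_X_P5 4).2.2 _ _ hX4dvd with hl | hr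
    · exact absurd hl not_dvd_X4
    · exact hr
  rw [he2] at key3
  have key4 : o' = -((X 1 - X 0) * e₂) := by
    apply mul_left_cancel₀ (X_ne_zero (R := ℂ) (4 : Fin 5))
    linear_combination key3
  have hfact : phiA f = phiA gpoly * e₂ := by
    rw [hh, hrel_expand, phiA_g, heo, he1, he2, ← ho', key4]
    ring
  -- invariance of e₂
  have inv_of : ∀ εv : Fin 5 → ℂ, sgnA εv (phiA f) = phiA f → sgnA εv (phiA gpoly) = phiA gpoly →
      sgnA εv e₂ = e₂ := by
    intro εv hf hg
    apply mul_left_cancel₀ phiA_g_ne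
    have := congrArg (sgnA εv) hfact
    rw [hf, map_mul, hg] at this
    exact this.symm.trans hfact
  have i2 : sgnA ![1, 1, -1, 1, 1] e₂ = e₂ :=
    inv_of _ hs2f (sgnA_phiA _ (by simp) (by simp) (by simp) (by simp)
      (by simp) gpoly)
  have i3 : sgnA ![1, 1, 1, -1, 1] e₂ = e₂ :=
    inv_of _ hs3f (sgnA_phiA _ (by simp) (by simp) (by simp) (by simp)
      (by simp) gpoly)
  have i4 : sgnA ![1, 1, 1, 1, -1] e₂ = e₂ :=
    inv_of _ hs4f (sgnA_phiA _ (by simp) (by simp) (by simp) (by simp)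
      (by simp) gpoly)
  obtain ⟨m, hm⟩ := allEven_decomp e₂ i2 i3 i4
  refine ⟨m, phiA_inj ?_⟩
  rw [map_mul, hm, hfact]

/-- The map `ℂ[x₁,x₂,y₀,y₁,t] → R` above surjects onto the ring of `{±1} × {±1}`-invariants
of `R` (its range is exactly the set of invariant elements), and its kernel is the principal
ideal generated by `y₁y₀ - t(x₁-x₂)²`; hence the invariant ring is
`ℂ[x₁,x₂,y₀,y₁,t]/(y₁y₀ - t(x₁-x₂)²)`. -/
theorem stmt4 :
    (∀ r : P5 ⧸ ITC1,
      (∀ s₁ s₂ : ℂ, (s₁ = 1 ∨ s₁ = -1) → (s₂ = 1 ∨ s₂ = -1) →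
        ∀ f : P5, Ideal.Quotient.mk ITC1 f = r →
          Ideal.Quotient.mk ITC1 (actTC1 s₁ s₂ f) = r)
      ↔ r ∈ psiTC1.range) ∧
    RingHom.ker psiTC1 = Ideal.span {X 3 * X 2 - X 4 * (X 0 - X 1) ^ 2} := by
  constructor
  · intro r
    constructor
    · -- invariant → in range
      intro hinv
      obtain ⟨f, hf⟩ := Ideal.Quotient.mk_surjective r
      have hA : Ideal.Quotient.mk ITC1 (actTC1 (-1) 1 f) = r :=
        hinv (-1) 1 (Or.inr rfl) (Or.inl rfl) f hf
      have hB : Ideal.Quotient.mk ITC1 (actTC1 1 (-1) f) = r :=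
        hinv 1 (-1) (Or.inl rfl) (Or.inr rfl) f hf
      have hD : Ideal.Quotient.mk ITC1 (actTC1 (-1) (-1) f) = r :=
        hinv (-1) (-1) (Or.inr rfl) (Or.inr rfl) f hf
      set F := C (4⁻¹ : ℂ) * (f + actTC1 (-1) 1 f + actTC1 1 (-1) f + actTC1 (-1) (-1) f)
        with hF
      have hmkF : Ideal.Quotient.mk ITC1 F = r := by
        have hsum : r + r + r + r = Ideal.Quotient.mk ITC1 (C (4 : ℂ)) * r := by
          calc r + r + r + r = Ideal.Quotient.mk ITC1 (f + f + f + f) := by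
                rw [map_add, map_add, map_add, hf]
            _ = Ideal.Quotient.mk ITC1 (C (4 : ℂ) * f) := by
                rw [show (C (4 : ℂ) : P5) * f = f + f + f + f from by
                  rw [show (C (4 : ℂ) : P5) = 4 from map_ofNat C 4]; ring]
            _ = Ideal.Quotient.mk ITC1 (C (4 : ℂ)) * r := by rw [map_mul, hf]
        have h4C : Ideal.Quotient.mk ITC1 (C (4⁻¹ : ℂ)) * Ideal.Quotient.mk ITC1 (C (4 : ℂ))
            = 1 := by
          rw [← map_mul, ← C_mul]
          norm_num
        rw [hF, map_mul, map_add, map_add, map_add, hf, hA, hB, hD, hsum, ← mul_assoc, h4C,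
          one_mul]
      have hAA : actTC1 (-1) 1 (actTC1 (-1) 1 f) = f := by
        rw [act_act, show ((-1 : ℂ) * (-1)) = 1 from by norm_num,
          show ((1 : ℂ) * 1) = 1 from by norm_num, act_id]
      have hAB : actTC1 (-1) 1 (actTC1 1 (-1) f) = actTC1 (-1) (-1) f := by
        rw [act_act, show ((-1 : ℂ) * 1) = -1 from by norm_num,
          show ((1 : ℂ) * (-1)) = -1 from by norm_num]
      have hAD : actTC1 (-1) 1 (actTC1 (-1) (-1) f) = actTC1 1 (-1) f := by
        rw [act_act, show ((-1 : ℂ) * (-1)) = 1 from by norm_num,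
          show ((1 : ℂ) * (-1)) = -1 from by norm_num]
      have hBB : actTC1 1 (-1) (actTC1 1 (-1) f) = f := by
        rw [act_act, show ((1 : ℂ) * 1) = 1 from by norm_num,
          show ((-1 : ℂ) * (-1)) = 1 from by norm_num, act_id]
      have hBA : actTC1 1 (-1) (actTC1 (-1) 1 f) = actTC1 (-1) (-1) f := by
        rw [act_act, show ((1 : ℂ) * (-1)) = -1 from by norm_num,
          show ((-1 : ℂ) * 1) = -1 from by norm_num]
      have hBD : actTC1 1 (-1) (actTC1 (-1) (-1) f) = actTC1 (-1) 1 f := by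
        rw [act_act, show ((1 : ℂ) * (-1)) = -1 from by norm_num,
          show ((-1 : ℂ) * (-1)) = 1 from by norm_num]
      have hAF : actTC1 (-1) 1 F = F := by
        rw [hF, act_C_mul, map_add, map_add, map_add, hAA, hAB, hAD]
        ring
      have hBF : actTC1 1 (-1) F = F := by
        rw [hF, act_C_mul, map_add, map_add, map_add, hBB, hBA, hBD]
        ring
      have hAs : sgnA ![1, 1, -1, -1, 1] F = F := by
        have h1 := act_eq_sgnA (-1) 1 F
        rw [show (![1, 1, (-1 : ℂ) * 1, -1, 1]) = ![1, 1, -1, -1, 1] from by norm_num] at h1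
        rw [← h1, hAF]
      have hBs : sgnA ![1, 1, -1, 1, -1] F = F := by
        have h1 := act_eq_sgnA 1 (-1) F
        rw [show (![1, 1, (1 : ℂ) * (-1), 1, -1]) = ![1, 1, -1, 1, -1] from by norm_num] at h1
        rw [← h1, hBF]
      obtain ⟨P, Q, hPQ⟩ := invariant_decomp F hAs hBs
      refine ⟨P - X 4 * (X 1 - X 0) * Q, ?_⟩
      show psiTC1 (P - X 4 * (X 1 - X 0) * Q) = r
      rw [psi_eq, ← hmkF, Ideal.Quotient.eq, ITC1, Ideal.mem_span_singleton']
      refine ⟨-(X 2 * phiA Q), ?_⟩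
      have h4' : phiA (X 4) = X 2 ^ 2 := by simp [phiA]
      have h1' : phiA (X 1) = X 1 := by simp [phiA]
      have h0' : phiA (X 0) = X 0 := by simp [phiA]
      rw [map_sub, map_mul, map_mul, map_sub, h4', h1', h0', hPQ, hrel_expand]
      ring
    · -- in range → invariant
      rintro ⟨q, hq⟩ s₁ s₂ hs₁ hs₂ f hf
      replace hq : psiTC1 q = r := hq
      have hs1sq : s₁ * s₁ = 1 := by rcases hs₁ with h | h <;> rw [h] <;> norm_num
      have hs2sq : s₂ * s₂ = 1 := by rcases hs₂ with h | h <;> rw [h] <;> norm_num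
      have hq' : Ideal.Quotient.mk ITC1 (phiA q) = r := by rw [← psi_eq, hq]
      have hdiff : f - phiA q ∈ ITC1 := Ideal.Quotient.eq.mp (hf.trans hq'.symm)
      rw [ITC1, Ideal.mem_span_singleton'] at hdiff
      obtain ⟨w, hw⟩ := hdiff
      have hact_phi : actTC1 s₁ s₂ (phiA q) = phiA q := by
        rw [act_eq_sgnA]
        apply sgnA_phiA
        · rfl
        · rfl
        · show s₁ * s₂ * (s₁ * s₂) = 1
          linear_combination s₂ * s₂ * hs1sq + hs2sq
        · exact hs1sq
        · exact hs2sq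
      have hfe : f = phiA q + w * relTC1 := by linear_combination -hw
      have key : actTC1 s₁ s₂ f = phiA q + actTC1 s₁ s₂ w * (C (s₁ * s₂) * relTC1) := by
        rw [hfe, map_add, map_mul, hact_phi, act_rel]
      have hrel0 : Ideal.Quotient.mk ITC1 (C (s₁ * s₂) * relTC1) = 0 := by
        rw [Ideal.Quotient.eq_zero_iff_mem]
        exact Ideal.mul_mem_left _ _ (Ideal.subset_span rfl)
      rw [key, map_add, map_mul, hrel0, mul_zero, add_zero, hq']
  · -- kernel
    apply le_antisymm
    · intro f hf
      rw [RingHom.mem_ker] at hf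
      obtain ⟨m, hm⟩ := ker_sub f hf
      rw [Ideal.mem_span_singleton]
      exact ⟨m, hm⟩
    · rw [Ideal.span_le]
      rintro x hx
      rw [Set.mem_singleton_iff] at hx
      subst hx
      rw [SetLike.mem_coe, RingHom.mem_ker]
      show psiTC1 gpoly = 0
      rw [psi_eq, Ideal.Quotient.eq_zero_iff_mem, ITC1, Ideal.mem_span_singleton]
      exact ⟨X 4 * X 3 - X 2 * (X 1 - X 0), by rw [phiA_g, hrel_expand]; ring⟩

end
end

section
/- A selfadjoint tuple (A_l, B_l, p_l, q_l)_{l∈ℤ/Nℤ} satisfying the chainsaw equations A_{l+1}B_l − B_lA_l + p_{l+1}q_l = 0 for all l ∈ ℤ/Nℤ is stable if and only if it is costable. -/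
open Matrix

noncomputable section

variable (N : ℕ) [NeZero N]

/-- The "quadratic" symmetric bilinear form on `V = ⊕_{l ∈ ℤ/N} ℂ^{d_l}`, pairing the
`l`-th and `(-l)`-th summands by the standard pairing (via `d(-l) = d(l)`). -/
def PhiV (d : ZMod N → ℕ) (hd : ∀ l, d (-l) = d l)
    (x y : ∀ l : ZMod N, Fin (d l) → ℂ) : ℂ :=
  ∑ l : ZMod N, ∑ i : Fin (d l), x l i * y (-l) (Fin.cast (hd l).symm i)

/-- The symplectic form on `W = ⊕_{l ∈ ℤ/N} ℂ·w_l` defined by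
`(w_l, w_m) = δ_{m,N-1-l}` for `0 ≤ l < N/2` (and extended antisymmetrically). -/
def PhiW (x y : ZMod N → ℂ) : ℂ :=
  ∑ l : ZMod N, (if l.val < N / 2 then (1 : ℂ) else -1) * x l * y (-1 - l)

/-- The endomorphism of `V` with blocks `A_l : V_l → V_l`. -/
def hatA (d : ZMod N → ℕ) (A : ∀ l : ZMod N, Matrix (Fin (d l)) (Fin (d l)) ℂ)
    (x : ∀ l : ZMod N, Fin (d l) → ℂ) : ∀ l : ZMod N, Fin (d l) → ℂ :=
  fun l => (A l).mulVec (x l)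

/-- The degree `+1` endomorphism of `V` with blocks `B_l : V_l → V_{l+1}`. -/
def hatB (d : ZMod N → ℕ) (B : ∀ l : ZMod N, Matrix (Fin (d (l + 1))) (Fin (d l)) ℂ)
    (x : ∀ l : ZMod N, Fin (d l) → ℂ) : ∀ l : ZMod N, Fin (d l) → ℂ :=
  fun l i => (B (l - 1)).mulVec (x (l - 1))
    (Fin.cast (congrArg d (by ring : l = l - 1 + 1)) i)

/-- The map `W → V` with blocks `p_l : W_{l-1} → V_l`. -/
def hatP (d : ZMod N → ℕ) (p : ∀ l : ZMod N, Fin (d l) → ℂ)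
    (w : ZMod N → ℂ) : ∀ l : ZMod N, Fin (d l) → ℂ :=
  fun l => w (l - 1) • p l

/-- The map `V → W` with blocks `q_l : V_l → W_l`. -/
def hatQ (d : ZMod N → ℕ) (q : ∀ l : ZMod N, Fin (d l) → ℂ)
    (x : ∀ l : ZMod N, Fin (d l) → ℂ) : ZMod N → ℂ :=
  fun l => q l ⬝ᵥ x l

/-- Selfadjointness of a tuple `(A_l, B_l, p_l, q_l)`: `A_{-l} = A_l^*`,
`B_{-l-1} = B_l^*`, `q_{-l} = p_l^*` with respect to the symmetric form on `V` and the
symplectic form on `W`. -/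
def Selfadjoint (d : ZMod N → ℕ) (hd : ∀ l, d (-l) = d l)
    (A : ∀ l : ZMod N, Matrix (Fin (d l)) (Fin (d l)) ℂ)
    (B : ∀ l : ZMod N, Matrix (Fin (d (l + 1))) (Fin (d l)) ℂ)
    (p q : ∀ l : ZMod N, Fin (d l) → ℂ) : Prop :=
  (∀ x y, PhiV N d hd (hatA N d A x) y = PhiV N d hd x (hatA N d A y)) ∧
  (∀ x y, PhiV N d hd (hatB N d B x) y = PhiV N d hd x (hatB N d B y)) ∧
  (∀ x w, PhiV N d hd x (hatP N d p w) = PhiW N (hatQ N d q x) w)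

/-- The chainsaw quiver equations `A_{l+1}B_l - B_lA_l + p_{l+1}q_l = 0`, `l ∈ ℤ/N`. -/
def Chainsaw (d : ZMod N → ℕ)
    (A : ∀ l : ZMod N, Matrix (Fin (d l)) (Fin (d l)) ℂ)
    (B : ∀ l : ZMod N, Matrix (Fin (d (l + 1))) (Fin (d l)) ℂ)
    (p q : ∀ l : ZMod N, Fin (d l) → ℂ) : Prop :=
  ∀ l : ZMod N, A (l + 1) * B l - B l * A l + vecMulVec (p (l + 1)) (q l) = 0

/-- Stability: the only collection of subspaces `V'_l ⊆ ℂ^{d_l}` with `A_lV'_l ⊆ V'_l`,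
`B_lV'_l ⊆ V'_{l+1}` and `p_l ∈ V'_l` for all `l` is `V'_l = ℂ^{d_l}`. -/
def Stable (d : ZMod N → ℕ)
    (A : ∀ l : ZMod N, Matrix (Fin (d l)) (Fin (d l)) ℂ)
    (B : ∀ l : ZMod N, Matrix (Fin (d (l + 1))) (Fin (d l)) ℂ)
    (p : ∀ l : ZMod N, Fin (d l) → ℂ) : Prop :=
  ∀ V' : ∀ l : ZMod N, Submodule ℂ (Fin (d l) → ℂ),
    (∀ l, ∀ v ∈ V' l, (A l).mulVec v ∈ V' l) →
    (∀ l, ∀ v ∈ V' l, (B l).mulVec v ∈ V' (l + 1)) →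
    (∀ l, p l ∈ V' l) → ∀ l, V' l = ⊤

/-- Costability: the only collection of subspaces `V'_l ⊆ ℂ^{d_l}` with `A_lV'_l ⊆ V'_l`,
`B_lV'_l ⊆ V'_{l+1}` and `q_l|_{V'_l} = 0` for all `l` is `V'_l = 0`. -/
def Costable (d : ZMod N → ℕ)
    (A : ∀ l : ZMod N, Matrix (Fin (d l)) (Fin (d l)) ℂ)
    (B : ∀ l : ZMod N, Matrix (Fin (d (l + 1))) (Fin (d l)) ℂ)
    (q : ∀ l : ZMod N, Fin (d l) → ℂ) : Prop :=
  ∀ V' : ∀ l : ZMod N, Submodule ℂ (Fin (d l) → ℂ),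
    (∀ l, ∀ v ∈ V' l, (A l).mulVec v ∈ V' l) →
    (∀ l, ∀ v ∈ V' l, (B l).mulVec v ∈ V' (l + 1)) →
    (∀ l, ∀ v ∈ V' l, q l ⬝ᵥ v = 0) → ∀ l, V' l = ⊥

namespace Stmt11Aux

variable (d : ZMod N → ℕ) (hd : ∀ l, d (-l) = d l)

/-- The pairing between `ℂ^{d l}` and `ℂ^{d (-l)}`. -/
def beta (l : ZMod N) (v : Fin (d l) → ℂ) (x : Fin (d (-l)) → ℂ) : ℂ :=
  ∑ i, v i * x (Fin.cast (hd l).symm i)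

/-- The element of `V` supported at `l` with value `v`. -/
def single (l : ZMod N) (v : Fin (d l) → ℂ) : ∀ m : ZMod N, Fin (d m) → ℂ :=
  fun m => if h : l = m then fun i => v (Fin.cast (congrArg d h).symm i) else 0

lemma single_self (l : ZMod N) (v : Fin (d l) → ℂ) : single N d l v l = v := by
  unfold single
  rw [dif_pos rfl]
  rfl

lemma single_ne {l m : ZMod N} (h : l ≠ m) (v : Fin (d l) → ℂ) : single N d l v m = 0 :=
  dif_neg h

lemma apply_congr {m m' : ZMod N} (h : m = m') (e : d m' = d m) (f : ∀ l, Fin (d l) → ℂ) :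
    (fun i => f m (Fin.cast e i)) = f m' := by subst h; rfl

lemma mem_congr {m m' : ZMod N} (h : m = m') (e : d m' = d m)
    (S : ∀ l : ZMod N, Submodule ℂ (Fin (d l) → ℂ)) {u : Fin (d m) → ℂ} (hu : u ∈ S m) :
    (fun i => u (Fin.cast e i)) ∈ S m' := by subst h; exact hu

lemma beta_add (l : ZMod N) (a b : Fin (d l) → ℂ) (x : Fin (d (-l)) → ℂ) :
    beta N d hd l (a + b) x = beta N d hd l a x + beta N d hd l b x := by
  simp [beta, add_mul, Finset.sum_add_distrib]

lemma beta_smul (l : ZMod N) (c : ℂ) (a : Fin (d l) → ℂ) (x : Fin (d (-l)) → ℂ) :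
    beta N d hd l (c • a) x = c * beta N d hd l a x := by
  simp [beta, Finset.mul_sum, mul_assoc]

lemma phiV_single_left (l : ZMod N) (v : Fin (d l) → ℂ) (y : ∀ m, Fin (d m) → ℂ) :
    PhiV N d hd (single N d l v) y = beta N d hd l v (y (-l)) := by
  unfold PhiV beta
  rw [Finset.sum_eq_single l]
  · rw [single_self]
  · intro b _ hb
    rw [single_ne N d (fun h => hb h.symm)]
    simp
  · simp

lemma phiV_single_right (l : ZMod N) (v : Fin (d l) → ℂ) (x : ∀ m, Fin (d m) → ℂ) :
    PhiV N d hd x (single N d l v) = beta N d hd l v (x (-l)) := by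
  unfold PhiV beta
  rw [Finset.sum_eq_single (-l)]
  · have hs := apply_congr N d (neg_neg l).symm (congrArg d (neg_neg l)) (single N d l v)
    rw [single_self] at hs
    rw [← hs]
    exact Fintype.sum_equiv (finCongr (hd l)) _ _ (fun i => mul_comm _ _)
  · intro b _ hb
    have hlb : l ≠ -b := fun h => hb (by rw [h, neg_neg])
    rw [single_ne N d hlb]
    simp
  · simp

lemma hatA_single (A : ∀ l : ZMod N, Matrix (Fin (d l)) (Fin (d l)) ℂ)
    (l : ZMod N) (v : Fin (d l) → ℂ) :
    hatA N d A (single N d l v) = single N d l (A l *ᵥ v) := by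
  funext m
  by_cases h : l = m
  · subst h
    show A l *ᵥ single N d l v l = single N d l (A l *ᵥ v) l
    rw [single_self, single_self]
  · show A m *ᵥ single N d l v m = single N d l (A l *ᵥ v) m
    rw [single_ne N d h, single_ne N d h, Matrix.mulVec_zero]

lemma mulVec_congr (B : ∀ l : ZMod N, Matrix (Fin (d (l + 1))) (Fin (d l)) ℂ)
    {m m' : ZMod N} (h : m' = m) (v : Fin (d m) → ℂ) (e : d m' = d m)
    (e' : d (m + 1) = d (m' + 1)) (i : Fin (d (m + 1))) :
    (B m' *ᵥ fun j => v (Fin.cast e j)) (Fin.cast e' i) = (B m *ᵥ v) i := by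
  subst h; rfl

lemma hatB_single (B : ∀ l : ZMod N, Matrix (Fin (d (l + 1))) (Fin (d l)) ℂ)
    (l : ZMod N) (v : Fin (d l) → ℂ) :
    hatB N d B (single N d l v) = single N d (l + 1) (B l *ᵥ v) := by
  funext m i
  by_cases h : l + 1 = m
  · subst h
    rw [single_self]
    unfold hatB
    have h1 : l = l + 1 - 1 := by ring
    have hs := apply_congr N d h1 (congrArg d h1.symm) (single N d l v)
    rw [single_self] at hs
    rw [← hs]
    exact mulVec_congr N d B h1.symm v _ _ i
  · unfold hatB
    have h2 : l ≠ m - 1 := fun hh => h (by rw [hh]; ring)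
    rw [single_ne N d h2, single_ne N d h]
    simp [Matrix.mulVec_zero]

lemma phiW_single (q : ∀ l : ZMod N, Fin (d l) → ℂ) (l : ZMod N) (v : Fin (d l) → ℂ)
    (w : ZMod N → ℂ) :
    PhiW N (hatQ N d q (single N d l v)) w
      = (if l.val < N / 2 then (1 : ℂ) else -1) * (q l ⬝ᵥ v) * w (-1 - l) := by
  unfold PhiW hatQ
  rw [Finset.sum_eq_single l]
  · rw [single_self]
  · intro b _ hb
    rw [single_ne N d (fun h => hb h.symm)]
    simp
  · simp

lemma betaA (A : ∀ l : ZMod N, Matrix (Fin (d l)) (Fin (d l)) ℂ)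
    (hA : ∀ x y, PhiV N d hd (hatA N d A x) y = PhiV N d hd x (hatA N d A y))
    (l : ZMod N) (v : Fin (d l) → ℂ) (w : Fin (d (-l)) → ℂ) :
    beta N d hd l (A l *ᵥ v) w = beta N d hd l v (A (-l) *ᵥ w) := by
  have h := hA (single N d l v) (single N d (-l) w)
  rw [hatA_single, hatA_single, phiV_single_left, phiV_single_left, single_self,
    single_self] at h
  exact h

lemma betaB (B : ∀ l : ZMod N, Matrix (Fin (d (l + 1))) (Fin (d l)) ℂ)
    (hB : ∀ x y, PhiV N d hd (hatB N d B x) y = PhiV N d hd x (hatB N d B y))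
    (l : ZMod N) (v : Fin (d l) → ℂ) (x' : Fin (d (-l - 1)) → ℂ)
    (e1 : d (-(l + 1)) = d (-l - 1)) (e2 : d (-l) = d (-l - 1 + 1)) :
    beta N d hd (l + 1) (B l *ᵥ v) (fun i => x' (Fin.cast e1 i))
      = beta N d hd l v (fun i => (B (-l - 1) *ᵥ x') (Fin.cast e2 i)) := by
  have h := hB (single N d l v) (single N d (-l - 1) x')
  rw [hatB_single, phiV_single_left, phiV_single_left] at h
  have hs1 := apply_congr N d (show (-l - 1 : ZMod N) = -(l + 1) by ring) e1 (single N d (-l - 1) x')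
  rw [single_self] at hs1
  rw [← hs1] at h
  unfold hatB at h
  rw [single_self] at h
  exact h

lemma betaPQ (p q : ∀ l : ZMod N, Fin (d l) → ℂ)
    (hpq : ∀ x w, PhiV N d hd x (hatP N d p w) = PhiW N (hatQ N d q x) w)
    (l : ZMod N) (v : Fin (d l) → ℂ) :
    beta N d hd l v (p (-l)) = (if l.val < N / 2 then (1 : ℂ) else -1) * (q l ⬝ᵥ v) := by
  have h := hpq (single N d l v) (Pi.single (-1 - l) 1)
  rw [phiV_single_left, phiW_single] at h
  unfold hatP at h
  rw [show (-l - 1 : ZMod N) = -1 - l by ring, Pi.single_eq_same, one_smul, mul_one] at h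
  exact h

lemma beta_symm (l : ZMod N) (v : Fin (d l) → ℂ) (x : Fin (d (-l)) → ℂ)
    (e : d (- -l) = d l) :
    beta N d hd l v x = beta N d hd (-l) x (fun i => v (Fin.cast e i)) := by
  unfold beta
  exact Fintype.sum_equiv (finCongr (hd l).symm) _ _ (fun j => mul_comm _ _)

lemma dot_eq_zero_all {n : ℕ} {x : Fin n → ℂ} (h : ∀ v : Fin n → ℂ, v ⬝ᵥ x = 0) :
    x = 0 := by
  funext i
  have h1 := h (Pi.single i 1)
  rwa [single_dotProduct, one_mul] at h1

lemma dot_eq_zero_all' {n : ℕ} {x : Fin n → ℂ} (h : ∀ v : Fin n → ℂ, x ⬝ᵥ v = 0) :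
    x = 0 := by
  funext i
  have h1 := h (Pi.single i 1)
  rwa [dotProduct_single, mul_one] at h1

/-- The dot product pairing as a map to the dual. -/
def dotL (n : ℕ) : (Fin n → ℂ) →ₗ[ℂ] Module.Dual ℂ (Fin n → ℂ) where
  toFun v :=
    { toFun := fun w => v ⬝ᵥ w
      map_add' := fun a b => dotProduct_add v a b
      map_smul' := fun c a => by simp }
  map_add' a b := by ext w; simp [add_dotProduct]
  map_smul' c a := by ext w; simp [smul_dotProduct]

lemma perp_eq_bot_imp_top {n : ℕ} (W : Submodule ℂ (Fin n → ℂ))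
    (h : ∀ v : Fin n → ℂ, (∀ w ∈ W, v ⬝ᵥ w = 0) → v = 0) : W = ⊤ := by
  have hinj : Function.Injective (dotL n) := by
    rw [← LinearMap.ker_eq_bot]
    apply (Submodule.eq_bot_iff _).mpr
    intro v hv
    have hv0 : dotL n v = 0 := LinearMap.mem_ker.mp hv
    exact dot_eq_zero_all' fun w => by simpa [dotL] using LinearMap.congr_fun hv0 w
  have hsurj : Function.Surjective (dotL n) :=
    (LinearMap.injective_iff_surjective_of_finrank_eq_finrank
      Subspace.dual_finrank_eq.symm).mp hinj
  have hann : W.dualAnnihilator = ⊥ := by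
    apply (Submodule.eq_bot_iff _).mpr
    intro f hf
    obtain ⟨v, rfl⟩ := hsurj f
    rw [Submodule.mem_dualAnnihilator] at hf
    rw [h v (fun w hw => hf w hw)]
    exact map_zero _
  exact Subspace.dualAnnihilator_inj.mp (by rw [hann, Submodule.dualAnnihilator_top])

/-- The orthogonal collection of a collection of subspaces. -/
def Perp (V' : ∀ l : ZMod N, Submodule ℂ (Fin (d l) → ℂ)) (l : ZMod N) :
    Submodule ℂ (Fin (d l) → ℂ) where
  carrier := {v | ∀ x ∈ V' (-l), beta N d hd l v x = 0}
  add_mem' := by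
    intro a b ha hb x hx
    rw [beta_add, ha x hx, hb x hx, add_zero]
  zero_mem' := by
    intro x hx
    simp [beta]
  smul_mem' := by
    intro c a ha x hx
    rw [beta_smul, ha x hx, mul_zero]

lemma mem_perp {V' : ∀ l : ZMod N, Submodule ℂ (Fin (d l) → ℂ)} {l : ZMod N}
    {v : Fin (d l) → ℂ} :
    v ∈ Perp N d hd V' l ↔ ∀ x ∈ V' (-l), beta N d hd l v x = 0 := Iff.rfl

lemma perpA (A : ∀ l : ZMod N, Matrix (Fin (d l)) (Fin (d l)) ℂ)
    (hA : ∀ x y, PhiV N d hd (hatA N d A x) y = PhiV N d hd x (hatA N d A y))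
    (V' : ∀ l : ZMod N, Submodule ℂ (Fin (d l) → ℂ))
    (hVA : ∀ l, ∀ v ∈ V' l, A l *ᵥ v ∈ V' l) :
    ∀ l, ∀ v ∈ Perp N d hd V' l, A l *ᵥ v ∈ Perp N d hd V' l := by
  intro l v hv
  rw [mem_perp]
  intro x hx
  rw [betaA N d hd A hA l v x]
  exact (mem_perp N d hd).mp hv _ (hVA (-l) x hx)

lemma perpB (B : ∀ l : ZMod N, Matrix (Fin (d (l + 1))) (Fin (d l)) ℂ)
    (hB : ∀ x y, PhiV N d hd (hatB N d B x) y = PhiV N d hd x (hatB N d B y))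
    (V' : ∀ l : ZMod N, Submodule ℂ (Fin (d l) → ℂ))
    (hVB : ∀ l, ∀ v ∈ V' l, B l *ᵥ v ∈ V' (l + 1)) :
    ∀ l, ∀ v ∈ Perp N d hd V' l, B l *ᵥ v ∈ Perp N d hd V' (l + 1) := by
  intro l v hv
  rw [mem_perp]
  intro x hx
  have h1 : (-(l + 1) : ZMod N) = -l - 1 := by ring
  set x' : Fin (d (-l - 1)) → ℂ := fun j => x (Fin.cast (congrArg d h1).symm j) with hx'def
  have hx'' : x' ∈ V' (-l - 1) := mem_congr N d h1 (congrArg d h1).symm V' hx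
  have hb : beta N d hd (l + 1) (B l *ᵥ v) x
      = beta N d hd l v
        (fun i => (B (-l - 1) *ᵥ x') (Fin.cast (congrArg d (show (-l : ZMod N) = -l - 1 + 1 by ring)) i)) :=
    betaB N d hd B hB l v x' (congrArg d h1) (congrArg d (show (-l : ZMod N) = -l - 1 + 1 by ring))
  rw [hb]
  exact (mem_perp N d hd).mp hv _
    (mem_congr N d (show (-l - 1 + 1 : ZMod N) = -l by ring)
      (congrArg d (show (-l : ZMod N) = -l - 1 + 1 by ring)) V' (hVB (-l - 1) x' hx''))

end Stmt11Aux

/-- A selfadjoint tuple satisfying the chainsaw equations is stable iff it is costable. -/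
theorem stmt11 (hN : 2 ≤ N) (hNeven : Even N)
    (d : ZMod N → ℕ) (hd : ∀ l, d (-l) = d l)
    (A : ∀ l : ZMod N, Matrix (Fin (d l)) (Fin (d l)) ℂ)
    (B : ∀ l : ZMod N, Matrix (Fin (d (l + 1))) (Fin (d l)) ℂ)
    (p q : ∀ l : ZMod N, Fin (d l) → ℂ)
    (hsa : Selfadjoint N d hd A B p q) (hch : Chainsaw N d A B p q) :
    Stable N d A B p ↔ Costable N d A B q := by
  obtain ⟨hA, hB, hPQ⟩ := hsa
  constructor
  · -- Stable → Costable
    intro hst V' hVA hVB hVq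
    have hUp : ∀ l, p l ∈ Stmt11Aux.Perp N d hd V' l := by
      intro l
      rw [Stmt11Aux.mem_perp]
      intro x hx
      rw [Stmt11Aux.beta_symm N d hd l (p l) x (congrArg d (neg_neg l)),
        Stmt11Aux.apply_congr N d (neg_neg l).symm (congrArg d (neg_neg l)) p,
        Stmt11Aux.betaPQ N d hd p q hPQ (-l) x, hVq (-l) x hx, mul_zero]
    have hTop := hst (Stmt11Aux.Perp N d hd V')
      (Stmt11Aux.perpA N d hd A hA V' hVA) (Stmt11Aux.perpB N d hd B hB V' hVB) hUp
    intro m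
    rw [Submodule.eq_bot_iff]
    intro x hx
    have hmem : (fun i => x (Fin.cast (congrArg d (neg_neg m)) i)) ∈ V' (- -m) :=
      Stmt11Aux.mem_congr N d (neg_neg m).symm (congrArg d (neg_neg m)) V' hx
    have hz : ∀ v : Fin (d (-m)) → ℂ,
        v ⬝ᵥ (fun j => x (Fin.cast (congrArg d (neg_neg m)) (Fin.cast (hd (-m)).symm j))) = 0 := by
      intro v
      have hvU : v ∈ Stmt11Aux.Perp N d hd V' (-m) :=
        Submodule.eq_top_iff'.mp (hTop (-m)) v
      exact (Stmt11Aux.mem_perp N d hd).mp hvU _ hmem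
    have hu := Stmt11Aux.dot_eq_zero_all hz
    funext i
    exact congrFun hu (Fin.cast (hd m).symm i)
  · -- Costable → Stable
    intro hco V' hVA hVB hVp
    have hUq : ∀ l, ∀ v ∈ Stmt11Aux.Perp N d hd V' l, q l ⬝ᵥ v = 0 := by
      intro l v hv
      have h0 : Stmt11Aux.beta N d hd l v (p (-l)) = 0 :=
        (Stmt11Aux.mem_perp N d hd).mp hv _ (hVp (-l))
      rw [Stmt11Aux.betaPQ N d hd p q hPQ l v] at h0
      have hep : (if (l : ZMod N).val < N / 2 then (1 : ℂ) else -1) ≠ 0 := by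
        split <;> norm_num
      exact (mul_eq_zero.mp h0).resolve_left hep
    have hBot := hco (Stmt11Aux.Perp N d hd V')
      (Stmt11Aux.perpA N d hd A hA V' hVA) (Stmt11Aux.perpB N d hd B hB V' hVB) hUq
    intro m
    apply Stmt11Aux.perp_eq_bot_imp_top
    intro v hv
    have hvU : (fun i => v (Fin.cast (hd m) i)) ∈ Stmt11Aux.Perp N d hd V' (-m) := by
      rw [Stmt11Aux.mem_perp]
      intro x hx
      have hw : (fun j => x (Fin.cast (congrArg d (neg_neg m).symm) j)) ∈ V' m :=
        Stmt11Aux.mem_congr N d (neg_neg m) (congrArg d (neg_neg m).symm) V' hx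
      have heq : Stmt11Aux.beta N d hd (-m) (fun i => v (Fin.cast (hd m) i)) x
          = v ⬝ᵥ (fun j => x (Fin.cast (congrArg d (neg_neg m).symm) j)) :=
        Fintype.sum_equiv (finCongr (hd m)) _ _ (fun i => rfl)
      rw [heq]
      exact hv _ hw
    rw [hBot (-m)] at hvU
    have hv0 : (fun i => v (Fin.cast (hd m) i)) = 0 := (Submodule.mem_bot ℂ).mp hvU
    funext i
    exact congrFun hv0 (Fin.cast (hd m).symm i)
end
end
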